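/- arXiv:1802.08917 — 2 statements merged into one kernel-verified Lean document; each statement's English description precedes it below -/
import Mathlib

section
/- Let h : ℝⁿ → ℝ be continuously differentiable, let C = {x | h(x) ≥ 0}, and suppose there is a constant γ > 0 such that ∇h(x) · f(x) ≥ -γ·h(x) for all x. Then along any solution x(t) of ẋ = f(x) with h(x(0)) ≥ 0, one has h(x(t)) ≥ 0 for all t ≥ 0. -/
/-- Barrier certificate with linear class-κ function: if `∇h(x)·f(x) ≥ -γ h(x)` everywhere,
then along any solution of `ẋ = f(x)` starting with `h(x 0) ≥ 0`, `h` stays nonnegative. -/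
theorem barrier_certificate_linear_kappa
    (n : ℕ) (f : EuclideanSpace ℝ (Fin n) → EuclideanSpace ℝ (Fin n))
    (hf : ∀ x, ∃ K, ∃ s ∈ nhds x, LipschitzOnWith K f s)
    (h : EuclideanSpace ℝ (Fin n) → ℝ) (hh : ContDiff ℝ 1 h)
    (γ : ℝ) (hγ : 0 < γ)
    (hbar : ∀ x, fderiv ℝ h x (f x) ≥ -γ * h x)
    (x : ℝ → EuclideanSpace ℝ (Fin n))
    (hsol : ∀ t ∈ Set.Ici (0 : ℝ), HasDerivAt x (f (x t)) t)
    (h0 : h (x 0) ≥ 0) :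
    ∀ t ∈ Set.Ici (0 : ℝ), h (x t) ≥ 0 := by
  set u : ℝ → ℝ := fun t => Real.exp (γ * t) * h (x t) with hu
  have hgder : ∀ t ∈ Set.Ici (0 : ℝ),
      HasDerivAt (fun t => h (x t)) (fderiv ℝ h (x t) (f (x t))) t := by
    intro t ht
    exact ((hh.differentiable one_ne_zero (x t)).hasFDerivAt).comp_hasDerivAt t (hsol t ht)
  have huder : ∀ t ∈ Set.Ici (0 : ℝ),
      HasDerivAt u (Real.exp (γ * t) * γ * h (x t)
        + Real.exp (γ * t) * fderiv ℝ h (x t) (f (x t))) t := by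
    intro t ht
    have he : HasDerivAt (fun t => Real.exp (γ * t)) (Real.exp (γ * t) * γ) t := by
      simpa using ((hasDerivAt_id t).const_mul γ).exp
    exact he.mul (hgder t ht)
  have hmono : MonotoneOn u (Set.Ici 0) := by
    apply monotoneOn_of_deriv_nonneg (convex_Ici 0)
    · intro t ht
      exact (huder t ht).continuousAt.continuousWithinAt
    · intro t ht
      rw [interior_Ici] at ht
      exact (huder t (Set.mem_Ici.mpr (le_of_lt (Set.mem_Ioi.mp ht)))).differentiableAt.differentiableWithinAt
    · intro t ht
      rw [interior_Ici] at ht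
      rw [(huder t (Set.mem_Ici.mpr (le_of_lt (Set.mem_Ioi.mp ht)))).deriv]
      have h1 : fderiv ℝ h (x t) (f (x t)) ≥ -γ * h (x t) := hbar (x t)
      nlinarith [Real.exp_pos (γ * t)]
  intro t ht
  have h2 : u 0 ≤ u t := hmono (Set.mem_Ici.mpr (le_refl 0)) ht (Set.mem_Ici.mp ht)
  have h3 : (0 : ℝ) ≤ u t := by
    refine le_trans ?_ h2
    simp only [hu, mul_zero, Real.exp_zero, one_mul]
    exact h0
  have h4 : (0:ℝ) ≤ Real.exp (γ * t) * h (x t) := h3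
  have := Real.exp_pos (γ * t)
  nlinarith
end

section
/- Let V : ℝⁿ → ℝ be a Lyapunov function and c* > 0 satisfy: -∇V(x)·f(x) > 0 for all x in V(c*) := {x | V(x) ≤ c*} with x ≠ 0. Define h̄(x) = c* - V(x) and C̄ = {x | h̄(x) ≥ 0}. Then for any extended class-κ function κ, h̄ satisfies the barrier condition ∇h̄(x)·f(x) ≥ -κ(h̄(x)) for all x ∈ C̄, and C̄ = V(c*). Consequently h̄ is a feasible solution to the barrier-certificate optimization and the optimal barrier-certified region C* satisfies μ(V(c*)) ≤ μ(C*). -/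
/-- The Lyapunov sublevel set yields a feasible barrier certificate `h̄ = c* - V`, and hence
the optimal barrier-certified region is at least as large (in Lebesgue measure) as the
Lyapunov sublevel estimate. -/
theorem lyapunov_sublevel_feasible_barrier
    (n : ℕ) (f : EuclideanSpace ℝ (Fin n) → EuclideanSpace ℝ (Fin n))
    (hf : ∀ x, ∃ K, ∃ s ∈ nhds x, LipschitzOnWith K f s) (hf0 : f 0 = 0)
    (V : EuclideanSpace ℝ (Fin n) → ℝ) (hV : ContDiff ℝ 1 V)
    (κ : ℝ → ℝ) (hκ : StrictMono κ) (hκ0 : κ 0 = 0)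
    (c : ℝ) (hc : 0 < c)
    (hdec : ∀ x, V x ≤ c → x ≠ 0 → -fderiv ℝ V x (f x) > 0)
    -- `hstar` is an optimal barrier certificate: its region `C*` has measure at least that
    -- of the region of every feasible barrier certificate `h'`.
    (hstar : EuclideanSpace ℝ (Fin n) → ℝ)
    (hopt : ∀ h' : EuclideanSpace ℝ (Fin n) → ℝ, Differentiable ℝ h' →
      (∀ x, h' x ≥ 0 → x ≠ 0 → -fderiv ℝ V x (f x) > 0) →
      (∀ x, h' x ≥ 0 → fderiv ℝ h' x (f x) ≥ -κ (h' x)) →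
      MeasureTheory.volume {x | h' x ≥ 0} ≤ MeasureTheory.volume {x | hstar x ≥ 0}) :
    (∀ x, c - V x ≥ 0 → fderiv ℝ (fun y => c - V y) x (f x) ≥ -κ (c - V x)) ∧
    {x | c - V x ≥ 0} = {x | V x ≤ c} ∧
    MeasureTheory.volume {x | V x ≤ c} ≤ MeasureTheory.volume {x | hstar x ≥ 0} := by
  have hVd : Differentiable ℝ V := hV.differentiable one_ne_zero
  have hderiv : ∀ x : EuclideanSpace ℝ (Fin n),
      fderiv ℝ (fun y => c - V y) x = -fderiv ℝ V x := by
    intro x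
    have : fderiv ℝ (fun y => c - V y) x =
        fderiv ℝ (fun _ : EuclideanSpace ℝ (Fin n) => c) x - fderiv ℝ V x :=
      fderiv_sub (differentiableAt_const c) (hVd x)
    simp [this]
  have hκnn : ∀ r : ℝ, 0 ≤ r → 0 ≤ κ r := by
    intro r hr
    rw [← hκ0]; exact hκ.monotone hr
  have key : ∀ x, c - V x ≥ 0 → fderiv ℝ (fun y => c - V y) x (f x) ≥ -κ (c - V x) := by
    intro x hx
    rw [hderiv x]
    by_cases hx0 : x = 0
    · subst hx0
      simp only [hf0, map_zero, ContinuousLinearMap.neg_apply, neg_zero]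
      simpa using neg_nonpos_of_nonneg (hκnn _ hx)
    · have h1 := hdec x (by linarith) hx0
      have h2 : -κ (c - V x) ≤ 0 := neg_nonpos_of_nonneg (hκnn _ hx)
      simp only [ContinuousLinearMap.neg_apply]
      linarith
  have hset : {x : EuclideanSpace ℝ (Fin n) | c - V x ≥ 0} = {x | V x ≤ c} := by
    ext x; simp [sub_nonneg]
  refine ⟨key, hset, ?_⟩
  have := hopt (fun x => c - V x)
    ((differentiable_const c).sub hVd)
    (fun x hx hx0 => hdec x (by simpa using sub_nonneg.mp hx) hx0)
    key
  rwa [hset] at this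
end
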